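/- With A as in the binomial determinant setting, evaluating A at x_i = a + (t+1−i)b − 1 for i = 1,…,t yields a matrix whose determinant equals (−1)^{bt(bt−1)/2}; in fact this evaluation is an upper-left anti-triangular matrix with all anti-diagonal entries equal to 1 and all entries below the anti-diagonal equal to 0. -/

import Mathlib

/-- Generalized binomial coefficient `C(x,k) = x(x-1)⋯(x-k+1)/k!` in a commutative ℚ-algebra. -/
noncomputable def gbinom {R : Type*} [CommRing R] [Algebra ℚ R] (x : R) (k : ℕ) : R :=
  algebraMap ℚ R ((k.factorial : ℚ)⁻¹) * ∏ i ∈ Finset.range k, (x - (i : R))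

/-- The binomial matrix `A` evaluated at `x_s = a + (t - s + 1)·b - 1` (with `s` one-based),
i.e. at `x_s = a + (t - s₀)·b - 1` for the zero-based column index `s₀`. -/
noncomputable def binomMatrixEval (a b t : ℕ) : Matrix (Fin t × Fin b) (Fin t × Fin b) ℚ :=
  fun p col =>
    gbinom ((a : ℚ) + ((t - (col.1 : ℕ) : ℕ) : ℚ) * b - 1)
      (a + (col.2 : ℕ) + (b * (p.1 : ℕ) + (p.2 : ℕ)))

lemma prod_sub_cast (N k : ℕ) :
    ∏ i ∈ Finset.range k, ((N : ℚ) - (i : ℚ)) = (N.descFactorial k : ℚ) := by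
  induction k with
  | zero => simp
  | succ k ih =>
    rw [Finset.prod_range_succ, ih, Nat.descFactorial_succ, Nat.cast_mul]
    rcases le_or_gt k N with h | h
    · rw [Nat.cast_sub h]; ring
    · rw [Nat.descFactorial_eq_zero_iff_lt.mpr h]; simp

lemma gbinom_nat (N k : ℕ) : gbinom (N : ℚ) k = (N.choose k : ℚ) := by
  unfold gbinom
  rw [prod_sub_cast, Nat.descFactorial_eq_factorial_mul_choose, Nat.cast_mul]
  simp only [Algebra.algebraMap_self_apply]
  rw [← mul_assoc, inv_mul_cancel₀ (by exact_mod_cast k.factorial_ne_zero), one_mul]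

lemma det_antidiag : ∀ (n : ℕ) (M : Matrix (Fin n) (Fin n) ℚ),
    (∀ i j : Fin n, (i : ℕ) + (j : ℕ) = n - 1 → M i j = 1) →
    (∀ i j : Fin n, (i : ℕ) + (j : ℕ) > n - 1 → M i j = 0) →
    M.det = (-1 : ℚ) ^ (n * (n - 1) / 2)
  | 0, M, _, _ => by simp [Matrix.det_fin_zero]
  | (n + 1), M, h1, h0 => by
    rw [Matrix.det_succ_row M (Fin.last n)]
    rw [Finset.sum_eq_single 0]
    · have e1 : M (Fin.last n) 0 = 1 := h1 _ _ (by simp)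
      have hminor := det_antidiag n
        (M.submatrix (Fin.last n).succAbove (0 : Fin (n + 1)).succAbove)
        (fun r k hk => by
          simp only [Matrix.submatrix_apply, Fin.succAbove_last, Fin.succAbove_zero]
          exact h1 _ _ (by have := r.2; simp [Fin.val_succ, Fin.coe_castSucc]; omega))
        (fun r k hk => by
          simp only [Matrix.submatrix_apply, Fin.succAbove_last, Fin.succAbove_zero]
          exact h0 _ _ (by have := r.2; simp [Fin.val_succ, Fin.coe_castSucc]; omega))
      rw [e1, hminor]
      have hexp : (n + 1) * ((n + 1) - 1) / 2 = n + n * (n - 1) / 2 := by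
        rw [Nat.triangle_succ]; omega
      rw [hexp, pow_add]
      simp [Fin.val_last]
      ring
    · intro j _ hj
      have hjv : (j : ℕ) ≠ 0 := fun h => hj (Fin.ext h)
      have : M (Fin.last n) j = 0 := h0 _ _ (by rw [Fin.val_last]; omega)
      rw [this]; ring
    · intro h; exact absurd (Finset.mem_univ 0) h

theorem binom_det_evaluation (a b t : ℕ) (ha : 1 ≤ a) (hb : 1 ≤ b) (ht : 1 ≤ t) :
    (binomMatrixEval a b t).det = (-1 : ℚ) ^ (b * t * (b * t - 1) / 2) ∧
      (∀ p col : Fin t × Fin b,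
          (b * (p.1 : ℕ) + (p.2 : ℕ)) + (b * (col.1 : ℕ) + (col.2 : ℕ)) = b * t - 1 →
          binomMatrixEval a b t p col = 1) ∧
      (∀ p col : Fin t × Fin b,
          (b * (p.1 : ℕ) + (p.2 : ℕ)) + (b * (col.1 : ℕ) + (col.2 : ℕ)) > b * t - 1 →
          binomMatrixEval a b t p col = 0) := by
  -- entries as binomial coefficients
  have hentry : ∀ p col : Fin t × Fin b,
      binomMatrixEval a b t p col =
        (((a + (t - (col.1 : ℕ)) * b - 1).choose
          (a + (col.2 : ℕ) + (b * (p.1 : ℕ) + (p.2 : ℕ)))) : ℚ) := by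
    intro p col
    have hs : (col.1 : ℕ) < t := col.1.2
    have h1 : 1 ≤ a + (t - (col.1 : ℕ)) * b := by omega
    have hcast : (a : ℚ) + ((t - (col.1 : ℕ) : ℕ) : ℚ) * b - 1
        = ((a + (t - (col.1 : ℕ)) * b - 1 : ℕ) : ℚ) := by
      rw [Nat.cast_sub h1]; push_cast; ring
    unfold binomMatrixEval
    rw [hcast, gbinom_nat]
  -- arithmetic facts
  have harith : ∀ col : Fin t × Fin b,
      (t - (col.1 : ℕ)) * b = b * t - b * (col.1 : ℕ) ∧
        b * (col.1 : ℕ) + b ≤ b * t := by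
    intro col
    have hs : (col.1 : ℕ) < t := col.1.2
    constructor
    · rw [Nat.sub_mul, mul_comm t b, mul_comm ((col.1 : ℕ)) b]
    · have := Nat.mul_le_mul_left b (show (col.1 : ℕ) + 1 ≤ t from hs)
      rw [Nat.mul_add, mul_one] at this; exact this
  have key1 : ∀ p col : Fin t × Fin b,
      (b * (p.1 : ℕ) + (p.2 : ℕ)) + (b * (col.1 : ℕ) + (col.2 : ℕ)) = b * t - 1 →
      binomMatrixEval a b t p col = 1 := by
    intro p col h
    rw [hentry]
    obtain ⟨hd, hle⟩ := harith col
    have hn : a + (col.2 : ℕ) + (b * (p.1 : ℕ) + (p.2 : ℕ))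
        = a + (t - (col.1 : ℕ)) * b - 1 := by
      rw [hd]; omega
    rw [← hn, Nat.choose_self, Nat.cast_one]
  have key0 : ∀ p col : Fin t × Fin b,
      (b * (p.1 : ℕ) + (p.2 : ℕ)) + (b * (col.1 : ℕ) + (col.2 : ℕ)) > b * t - 1 →
      binomMatrixEval a b t p col = 0 := by
    intro p col h
    rw [hentry]
    obtain ⟨hd, hle⟩ := harith col
    have hlt : a + (t - (col.1 : ℕ)) * b - 1
        < a + (col.2 : ℕ) + (b * (p.1 : ℕ) + (p.2 : ℕ)) := by
      rw [hd]; omega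
    rw [Nat.choose_eq_zero_of_lt hlt, Nat.cast_zero]
  refine ⟨?_, key1, key0⟩
  -- determinant via reindexing
  have hidx : ∀ i : Fin (t * b),
      b * (((finProdFinEquiv.symm i).1 : Fin t) : ℕ)
        + (((finProdFinEquiv.symm i).2 : Fin b) : ℕ) = (i : ℕ) := by
    intro i
    simp only [finProdFinEquiv_symm_apply, Fin.coe_divNat, Fin.coe_modNat]
    exact Nat.div_add_mod (i : ℕ) b
  have hdet : (binomMatrixEval a b t).det
      = ((binomMatrixEval a b t).submatrix finProdFinEquiv.symm finProdFinEquiv.symm).det :=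
    (Matrix.det_submatrix_equiv_self finProdFinEquiv.symm _).symm
  rw [hdet, det_antidiag (t * b) _ ?_ ?_]
  · rw [mul_comm t b]
  · intro i j hij
    exact key1 _ _ (by rw [hidx i, hidx j, mul_comm b t]; exact hij)
  · intro i j hij
    exact key0 _ _ (by rw [hidx i, hidx j, mul_comm b t]; exact hij)
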